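/- Let Z be a reflexive Banach space, V a normed space, j : Z → V a continuous linear injection, and F : Z → [0,∞] a convex function that is continuous with respect to the norm of Z. Assume F is coercive in the sense that for any sequence (z_n) with sup_n F(z_n) < ∞ one has sup_n ‖z_n‖_Z < ∞. Then for every z ∈ Z, the relaxed functional F̄(z) := inf{ liminf_n F(z_n) : z_n ∈ Z, j(z_n) → j(z) in V } equals F(z). -/

import Mathlib

open Filter Topology NormedSpace ENNReal

/-- A point in a closed set along a real-valued cluster point argument. -/
private lemma mapClusterPt_mem_closed {f : ℕ → ℝ} {a : ℝ} {C : Set ℝ}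
    (hC : IsClosed C) (hf : ∀ k, f k ∈ C) (h : MapClusterPt a atTop f) : a ∈ C := by
  have h1 : ClusterPt a (Filter.map f atTop) := h.clusterPt
  have h2 : Filter.map f atTop ≤ 𝓟 C := by
    rw [Filter.le_principal_iff, Filter.mem_map]
    exact Filter.Eventually.of_forall hf
  have h3 : ClusterPt a (𝓟 C) := h1.mono h2
  exact hC.closure_eq ▸ mem_closure_iff_clusterPt.mpr h3

/-- Key lemma: in a reflexive space, if a bounded sequence lies in a closed convex set
and its image under an injective continuous linear map converges to `j z`, then `z`
belongs to the set. -/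
private lemma mem_of_bounded_of_tendsto {Z V : Type*}
    [NormedAddCommGroup Z] [NormedSpace ℝ Z] [CompleteSpace Z]
    [NormedAddCommGroup V] [NormedSpace ℝ V]
    (hrefl : Function.Surjective (inclusionInDoubleDual ℝ Z))
    (j : Z →L[ℝ] V) (hj : Function.Injective j)
    {S : Set Z} (hSconv : Convex ℝ S) (hSclosed : IsClosed S)
    {u : ℕ → Z} {M : ℝ} (hM : ∀ k, ‖u k‖ ≤ M) (huS : ∀ k, u k ∈ S)
    {z : Z} (hlim : Tendsto (fun k => j (u k)) atTop (𝓝 (j z))) :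
    z ∈ S := by
  -- embed the sequence into the weak-star topologized double dual
  set x : ℕ → WeakDual ℝ (StrongDual ℝ Z) :=
    fun k => StrongDual.toWeakDual (inclusionInDoubleDual ℝ Z (u k)) with hx
  have hxK : ∀ k, x k ∈ (WeakDual.toStrongDual ⁻¹' Metric.closedBall 0 M :
      Set (WeakDual ℝ (StrongDual ℝ Z))) := by
    intro k
    simp only [Set.mem_preimage, Metric.mem_closedBall, dist_zero_right]
    refine (dist_zero_right (WeakDual.toStrongDual (x k) : StrongDual ℝ (StrongDual ℝ Z))).trans_le ?_
    calc ‖WeakDual.toStrongDual (x k)‖ = ‖inclusionInDoubleDual ℝ Z (u k)‖ := rfl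
      _ ≤ ‖u k‖ := double_dual_bound ℝ Z (u k)
      _ ≤ M := hM k
  have hcpt : IsCompact (WeakDual.toStrongDual ⁻¹' Metric.closedBall (0 : StrongDual ℝ (StrongDual ℝ Z)) M) :=
    WeakDual.isCompact_closedBall (𝕜 := ℝ) (E := StrongDual ℝ Z) 0 M
  obtain ⟨Λ, -, hΛ⟩ := hcpt.exists_mapClusterPt (f := atTop) (u := x) (by
    rw [Filter.le_principal_iff, Filter.mem_map]
    exact Filter.Eventually.of_forall hxK)
  -- use reflexivity to realize the cluster point in Z
  obtain ⟨w, hw⟩ := hrefl (WeakDual.toStrongDual Λ)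
  -- each functional evaluated at w is a cluster point of its values on the sequence
  have heval : ∀ φ : StrongDual ℝ Z, MapClusterPt (φ w) atTop (fun k => φ (u k)) := by
    intro φ
    have hc : Continuous fun q : WeakDual ℝ (StrongDual ℝ Z) => q φ := WeakDual.eval_continuous φ
    have h0 := hΛ.continuousAt_comp (f := fun q : WeakDual ℝ (StrongDual ℝ Z) => q φ) hc.continuousAt
    have h1 : MapClusterPt (Λ φ) atTop (fun k => φ (u k)) := h0
    have hΛφ : Λ φ = φ w := by
      have h2 : (inclusionInDoubleDual ℝ Z w) φ = Λ φ := by rw [hw]; rfl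
      rw [← h2, dual_def]
    rwa [hΛφ] at h1
  -- identify w = z
  have hwz : w = z := by
    apply hj
    rw [eq_iff_forall_dual_eq (𝕜 := ℝ)]
    intro ψ
    have h1 : MapClusterPt ((ψ.comp j) w) atTop (fun k => (ψ.comp j) (u k)) := heval (ψ.comp j)
    have h2 : Tendsto (fun k => (ψ.comp j) (u k)) atTop (𝓝 (ψ (j z))) :=
      (ψ.continuous.tendsto _).comp hlim
    have h3 : ClusterPt (ψ (j w)) (𝓝 (ψ (j z))) := h1.clusterPt.mono h2
    exact eq_of_nhds_neBot h3
  -- show z ∈ S by Hahn-Banach separation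
  by_contra hzS
  rw [← hwz] at hzS
  obtain ⟨f, c, hfw, hfS⟩ := geometric_hahn_banach_point_closed hSconv hSclosed hzS
  have h1 : MapClusterPt (f w) atTop (fun k => f (u k)) := heval f
  have h2 : f w ∈ Set.Ici c :=
    mapClusterPt_mem_closed isClosed_Ici (fun k => le_of_lt (hfS _ (huS k))) h1
  exact absurd (lt_of_lt_of_le hfw h2) (lt_irrefl _)

/-- If `Z` is a reflexive Banach space, `j : Z → V` a continuous linear injection,
and `F : Z → [0,∞]` is convex, norm-continuous, and coercive (sequences with bounded
energy are norm-bounded), then the relaxed functional of `F` with respect to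
convergence of `j(z_n)` in `V` coincides with `F`. -/
theorem stmt5 {Z V : Type*}
    [NormedAddCommGroup Z] [NormedSpace ℝ Z] [CompleteSpace Z]
    [NormedAddCommGroup V] [NormedSpace ℝ V]
    (hrefl : Function.Surjective (inclusionInDoubleDual ℝ Z))
    (j : Z →L[ℝ] V) (hj : Function.Injective j)
    (F : Z → ℝ≥0∞)
    (hconv : ∀ u v : Z, ∀ α : ℝ, 0 ≤ α → α ≤ 1 →
      F (α • u + (1 - α) • v) ≤ ENNReal.ofReal α * F u + ENNReal.ofReal (1 - α) * F v)
    (hcont : Continuous F)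
    (hcoer : ∀ z : ℕ → Z, (⨆ n, F (z n)) < ⊤ → ∃ M : ℝ, ∀ n, ‖z n‖ ≤ M) :
    ∀ z : Z,
      (⨅ (zs : ℕ → Z) (_ : Tendsto (fun n => j (zs n)) atTop (𝓝 (j z))),
        liminf (fun n => F (zs n)) atTop) = F z := by
  intro z
  apply le_antisymm
  · -- constant sequence
    refine iInf_le_of_le (fun _ => z) (iInf_le_of_le tendsto_const_nhds ?_)
    simp [liminf_const]
  · refine le_iInf fun zs => le_iInf fun hzs => ?_
    set L := liminf (fun n => F (zs n)) atTop with hL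
    by_cases hLtop : L = ⊤
    · rw [hLtop]; exact le_top
    -- show F z ≤ L + ε for all ε > 0
    apply ENNReal.le_of_forall_pos_le_add
    intro ε hε _
    have hLε : L < L + ε := ENNReal.lt_add_right hLtop (by exact_mod_cast hε.ne')
    have hfreq : ∃ᶠ n in atTop, F (zs n) < L + ε := frequently_lt_of_liminf_lt (by isBoundedDefault) hLε
    obtain ⟨φ, hφmono, hφ⟩ := Filter.extraction_of_frequently_atTop hfreq
    -- the extracted subsequence has bounded energy, hence is norm-bounded
    have hsup : (⨆ k, F (zs (φ k))) < ⊤ := by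
      refine lt_of_le_of_lt (iSup_le fun k => le_of_lt (hφ k)) ?_
      exact ENNReal.add_lt_top.mpr ⟨lt_top_iff_ne_top.mpr hLtop, ENNReal.coe_lt_top⟩
    obtain ⟨M, hM⟩ := hcoer (fun k => zs (φ k)) hsup
    -- sublevel set
    set S : Set Z := {u | F u ≤ L + ε} with hS
    have hSconv : Convex ℝ S := by
      intro a ha b hb s t hs ht hst
      have h1 : F (s • a + t • b) ≤ ENNReal.ofReal s * F a + ENNReal.ofReal t * F b := by
        have := hconv a b s hs (by linarith)
        rwa [show (1 : ℝ) - s = t by linarith] at this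
      calc F (s • a + t • b) ≤ ENNReal.ofReal s * F a + ENNReal.ofReal t * F b := h1
        _ ≤ ENNReal.ofReal s * (L + ε) + ENNReal.ofReal t * (L + ε) := by
            gcongr
            exacts [ha, hb]
        _ = (ENNReal.ofReal s + ENNReal.ofReal t) * (L + ε) := by ring
        _ = 1 * (L + ε) := by
            rw [← ENNReal.ofReal_add hs ht, hst, ENNReal.ofReal_one]
        _ = L + ε := one_mul _
    have hSclosed : IsClosed S := IsClosed.preimage hcont isClosed_Iic
    have hmem : ∀ k, zs (φ k) ∈ S := fun k => le_of_lt (hφ k)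
    have hlim' : Tendsto (fun k => j (zs (φ k))) atTop (𝓝 (j z)) :=
      hzs.comp hφmono.tendsto_atTop
    exact mem_of_bounded_of_tendsto hrefl j hj hSconv hSclosed hM hmem hlim'
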